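/- Carleson embedding theorem on L^p(μ): Let D be a dyadic grid in ℝⁿ, 1 < p ≤ 2, and for each S ∈ D a measurable function A_S supported in S. If Car := (sup_{Q∈D} μ(Q)^{-1} ∫_Q (∑_{S⊂Q, S∈D} |A_S(x)|²)^{p/2} dμ(x))^{1/p} < ∞, then ‖(∑_{S∈D} |⟨f⟩_S|² |A_S|²)^{1/2}‖_{L^p(μ)} ≲ Car · ‖f‖_{L^p(μ)} for all f ∈ L^p(μ). -/

import Mathlib

open MeasureTheory
open scoped ENNReal NNReal

noncomputable section

/-- The (half-open) dyadic cube of sidelength `2^k` with corner `c * 2^k` in `ℝⁿ`. -/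
def dyadicCube (n : ℕ) (k : ℤ) (c : Fin n → ℤ) : Set (Fin n → ℝ) :=
  {x | ∀ i, (c i : ℝ) * 2 ^ k ≤ x i ∧ x i < ((c i : ℝ) + 1) * 2 ^ k}

/-- The average `⟨f⟩_S` of `f` over `S` (interpreted as `0` when `μ(S) = 0`). -/
def cubeAvg {n : ℕ} (μ : Measure (Fin n → ℝ)) (f : (Fin n → ℝ) → ℝ)
    (q : ℤ × (Fin n → ℤ)) : ℝ :=
  (μ (dyadicCube n q.1 q.2)).toReal⁻¹ * ∫ y in dyadicCube n q.1 q.2, f y ∂μ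

open scoped Classical

namespace Dyad

variable {n : ℕ}

abbrev Q (n : ℕ) := ℤ × (Fin n → ℤ)

def cb (q : Q n) : Set (Fin n → ℝ) := dyadicCube n q.1 q.2

lemma measurableSet_cb (q : Q n) : MeasurableSet (cb q) := by
  have : cb q = ⋂ i, {x : Fin n → ℝ | (q.2 i : ℝ) * 2 ^ q.1 ≤ x i ∧ x i < ((q.2 i : ℝ) + 1) * 2 ^ q.1} := by
    ext x; simp [cb, dyadicCube, Set.mem_iInter]
  rw [this]
  refine MeasurableSet.iInter fun i => ?_
  have : {x : Fin n → ℝ | (q.2 i : ℝ) * 2 ^ q.1 ≤ x i ∧ x i < ((q.2 i : ℝ) + 1) * 2 ^ q.1}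
      = (fun x : Fin n → ℝ => x i) ⁻¹' (Set.Ico ((q.2 i : ℝ) * 2 ^ q.1) (((q.2 i : ℝ) + 1) * 2 ^ q.1)) := rfl
  rw [this]
  exact (measurable_pi_apply i) measurableSet_Ico

lemma cb_nonempty (q : Q n) : (cb q).Nonempty := by
  refine ⟨fun i => (q.2 i : ℝ) * 2 ^ q.1, fun i => ⟨le_rfl, ?_⟩⟩
  have h2 : (0:ℝ) < 2 ^ q.1 := zpow_pos (by norm_num) _
  show (q.2 i : ℝ) * 2 ^ q.1 < ((q.2 i : ℝ) + 1) * 2 ^ q.1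
  nlinarith

/-- 1D: if two dyadic intervals at scales `k ≤ k'` intersect, the smaller is contained. -/
lemma interval_subset {k k' : ℤ} (hk : k ≤ k') (c c' : ℤ) (x : ℝ)
    (h1 : (c : ℝ) * 2 ^ k ≤ x) (h2 : x < ((c : ℝ) + 1) * 2 ^ k)
    (h1' : (c' : ℝ) * 2 ^ k' ≤ x) (h2' : x < ((c' : ℝ) + 1) * 2 ^ k') :
    ∀ y : ℝ, (c : ℝ) * 2 ^ k ≤ y → y < ((c : ℝ) + 1) * 2 ^ k →
      ((c' : ℝ) * 2 ^ k' ≤ y ∧ y < ((c' : ℝ) + 1) * 2 ^ k') := by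
  have h2pos : (0:ℝ) < 2 ^ k := zpow_pos (by norm_num) _
  set d : ℕ := (k' - k).toNat with hd
  have hkd : k' = k + d := by
    simp only [hd, Int.toNat_of_nonneg (sub_nonneg.2 hk)]; ring
  have hpow : (2:ℝ) ^ k' = 2 ^ k * 2 ^ d := by
    rw [hkd, zpow_add₀ (by norm_num : (2:ℝ) ≠ 0), zpow_natCast]
  -- integer inequalities
  have e1 : (c' : ℝ) * 2 ^ k' = ((c' : ℝ) * 2 ^ d) * 2 ^ k := by rw [hpow]; ring
  have e2 : ((c' : ℝ) + 1) * 2 ^ k' = (((c' : ℝ) + 1) * 2 ^ d) * 2 ^ k := by rw [hpow]; ring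
  have hA : (c' : ℝ) * 2 ^ d ≤ c := by
    have hkey : (c' : ℝ) * 2 ^ d * 2 ^ k < ((c : ℝ) + 1) * 2 ^ k := by
      rw [← e1]; exact lt_of_le_of_lt h1' h2
    have hlt : (c' : ℝ) * 2 ^ d < (c : ℝ) + 1 := lt_of_mul_lt_mul_right hkey h2pos.le
    have : (c' * 2 ^ d : ℤ) < c + 1 := by
      exact_mod_cast (by push_cast; exact hlt : ((c' * 2 ^ d : ℤ) : ℝ) < ((c + 1 : ℤ) : ℝ))
    exact_mod_cast Int.lt_add_one_iff.mp this
  have hB : (c : ℝ) + 1 ≤ ((c' : ℝ) + 1) * 2 ^ d := by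
    have hkey : (c : ℝ) * 2 ^ k < ((c' : ℝ) + 1) * 2 ^ d * 2 ^ k := by
      rw [← e2]; exact lt_of_le_of_lt h1 h2'
    have hlt : (c : ℝ) < ((c' : ℝ) + 1) * 2 ^ d := lt_of_mul_lt_mul_right hkey h2pos.le
    have : (c : ℤ) < (c' + 1) * 2 ^ d := by
      exact_mod_cast (by push_cast; exact hlt : ((c : ℤ) : ℝ) < (((c' + 1) * 2 ^ d : ℤ) : ℝ))
    exact_mod_cast Int.add_one_le_iff.mpr this
  intro y hy1 hy2
  constructor
  · calc (c' : ℝ) * 2 ^ k' = (c' : ℝ) * 2 ^ d * 2 ^ k := e1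
    _ ≤ (c : ℝ) * 2 ^ k := by exact mul_le_mul_of_nonneg_right hA h2pos.le
    _ ≤ y := hy1
  · calc y < ((c : ℝ) + 1) * 2 ^ k := hy2
    _ ≤ ((c' : ℝ) + 1) * 2 ^ d * 2 ^ k := mul_le_mul_of_nonneg_right hB h2pos.le
    _ = ((c' : ℝ) + 1) * 2 ^ k' := e2.symm

lemma cb_subset {q q' : Q n} (hk : q.1 ≤ q'.1) (h : (cb q ∩ cb q').Nonempty) :
    cb q ⊆ cb q' := by
  obtain ⟨x, hx, hx'⟩ := h
  intro y hy i
  exact interval_subset hk (q.2 i) (q'.2 i) (x i) (hx i).1 (hx i).2 (hx' i).1 (hx' i).2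
    (y i) (hy i).1 (hy i).2

/-- Every cube has an ancestor at any higher scale. -/
lemma exists_ancestor (q : Q n) (N : ℤ) (hN : q.1 ≤ N) :
    ∃ c' : Fin n → ℤ, cb q ⊆ cb (N, c') := by
  set d : ℕ := (N - q.1).toNat with hd
  have hkd : N = q.1 + d := by
    simp only [hd, Int.toNat_of_nonneg (sub_nonneg.2 hN)]; ring
  have hpow : (2:ℝ) ^ N = 2 ^ q.1 * 2 ^ d := by
    rw [hkd, zpow_add₀ (by norm_num : (2:ℝ) ≠ 0), zpow_natCast]
  refine ⟨fun i => (q.2 i) / (2 ^ d : ℤ), fun x hx i => ?_⟩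
  have h2pos : (0:ℝ) < 2 ^ q.1 := zpow_pos (by norm_num) _
  have hdpos : (0:ℤ) < 2 ^ d := by positivity
  set c := q.2 i
  set c' := c / (2 ^ d : ℤ)
  have hdiv : c' * 2 ^ d ≤ c ∧ c < (c' + 1) * 2 ^ d := by
    constructor
    · exact Int.ediv_mul_le _ (by positivity)
    · exact Int.lt_ediv_add_one_mul_self _ hdpos
  have hA : (c' : ℝ) * 2 ^ d ≤ c := by exact_mod_cast hdiv.1
  have hB : (c : ℝ) + 1 ≤ ((c' : ℝ) + 1) * 2 ^ d := by
    have : (c + 1 : ℤ) ≤ (c' + 1) * 2 ^ d := Int.add_one_le_iff.mpr hdiv.2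
    exact_mod_cast this
  constructor
  · calc ((c' : ℝ)) * 2 ^ N = (c' : ℝ) * 2 ^ d * 2 ^ q.1 := by rw [hpow]; ring
    _ ≤ (c : ℝ) * 2 ^ q.1 := mul_le_mul_of_nonneg_right hA h2pos.le
    _ ≤ x i := (hx i).1
  · calc x i < ((c : ℝ) + 1) * 2 ^ q.1 := (hx i).2
    _ ≤ ((c' : ℝ) + 1) * 2 ^ d * 2 ^ q.1 := mul_le_mul_of_nonneg_right hB h2pos.le
    _ = ((c' : ℝ) + 1) * 2 ^ N := by rw [hpow]; ring

/-- maximality of a cube within a family -/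
def IsMax (P : Q n → Prop) (q : Q n) : Prop :=
  P q ∧ ∀ q', P q' → cb q ⊆ cb q' → cb q' ⊆ cb q

lemma exists_max {P : Q n → Prop} {N : ℤ} (hbd : ∀ q, P q → q.1 ≤ N)
    {q : Q n} (hq : P q) : ∃ m, IsMax P m ∧ cb q ⊆ cb m := by
  classical
  set K : Finset ℤ := (Finset.Icc q.1 N).filter
    (fun k => ∃ c, P (k, c) ∧ cb q ⊆ cb (k, c)) with hK
  have hqK : q.1 ∈ K := by
    refine Finset.mem_filter.2 ⟨Finset.mem_Icc.2 ⟨le_rfl, hbd q hq⟩, ⟨q.2, hq, subset_rfl⟩⟩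
  have hKne : K.Nonempty := ⟨q.1, hqK⟩
  set k0 := K.max' hKne with hk0
  have hk0K : k0 ∈ K := K.max'_mem hKne
  obtain ⟨hk0Icc, c0, hPc0, hsub0⟩ := Finset.mem_filter.1 hk0K
  refine ⟨(k0, c0), ⟨hPc0, ?_⟩, hsub0⟩
  intro q'' hq'' hsub''
  rcases le_or_gt q''.1 k0 with h | h
  · refine cb_subset h ?_
    obtain ⟨x, hx⟩ := cb_nonempty (n := n) (q := (k0, c0))
    exact ⟨x, hsub'' hx, hx⟩
  · exfalso
    have hmem : q''.1 ∈ K := by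
      refine Finset.mem_filter.2 ⟨Finset.mem_Icc.2 ⟨?_, hbd _ hq''⟩, ⟨q''.2, hq'', ?_⟩⟩
      · exact le_trans (Finset.mem_Icc.1 hk0Icc).1 h.le
      · exact subset_trans hsub0 (by exact hsub'')
    exact absurd (K.le_max' _ hmem) (not_le.2 h)

lemma max_disjoint {P : Q n → Prop} {q q' : Q n} (hq : IsMax P q) (hq' : IsMax P q')
    (hne : cb q ≠ cb q') : Disjoint (cb q) (cb q') := by
  rw [Set.disjoint_left]
  intro x hx hx'
  rcases le_total q.1 q'.1 with h | h
  · have hsub := cb_subset h ⟨x, hx, hx'⟩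
    exact hne (le_antisymm hsub (hq.2 _ hq'.1 hsub))
  · have hsub := cb_subset h ⟨x, hx', hx⟩
    exact hne (le_antisymm (hq'.2 _ hq.1 hsub) hsub)

end Dyad
namespace Dyad

variable {n : ℕ} {μ : Measure (Fin n → ℝ)}

lemma rpow_iSup {ι : Sort*} [Nonempty ι] (a : ι → ℝ≥0∞) {c : ℝ} (hc : 0 < c) :
    (⨆ i, a i) ^ c = ⨆ i, (a i) ^ c := by
  have h := (ENNReal.orderIsoRpow c hc).map_iSup a
  simp only [ENNReal.orderIsoRpow_apply] at h
  exact h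

/-- `L¹`-average of an `ℝ≥0∞`-valued function over a cube. -/
def avgl (μ : Measure (Fin n → ℝ)) (g : (Fin n → ℝ) → ℝ≥0∞) (q : Q n) : ℝ≥0∞ :=
  (μ (cb q))⁻¹ * ∫⁻ x in cb q, g x ∂μ

lemma mul_meas_le {g : (Fin n → ℝ) → ℝ≥0∞} {lam : ℝ≥0∞} {q : Q n}
    (h : lam < avgl μ g q) : lam * μ (cb q) ≤ ∫⁻ x in cb q, g x ∂μ := by
  rcases eq_or_ne (μ (cb q)) 0 with hm | hm0
  · simp [hm]
  rcases eq_or_ne (μ (cb q)) ∞ with hm | hmtop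
  · exfalso
    have : avgl μ g q = 0 := by simp [avgl, hm]
    simp [this] at h
  have h1 : lam * μ (cb q) ≤ avgl μ g q * μ (cb q) := mul_le_mul_left h.le _
  calc lam * μ (cb q) ≤ avgl μ g q * μ (cb q) := h1
    _ = (∫⁻ x in cb q, g x ∂μ) * ((μ (cb q))⁻¹ * μ (cb q)) := by rw [avgl]; ring
    _ = ∫⁻ x in cb q, g x ∂μ := by rw [ENNReal.inv_mul_cancel hm0 hmtop, mul_one]

lemma measurableSet_biUnion (P : Q n → Prop) :
    MeasurableSet (⋃ (q : Q n) (_ : P q), cb q) :=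
  MeasurableSet.iUnion fun q => MeasurableSet.iUnion fun _ => measurableSet_cb q

/-- The truncated union equals the union of the maximal cubes. -/
lemma union_eq_sUnion_max (P : Q n → Prop) (N : ℤ) (hbd : ∀ q, P q → q.1 ≤ N) :
    (⋃ (q : Q n) (_ : P q), cb q) = ⋃₀ (cb '' {q : Q n | IsMax P q}) := by
  apply subset_antisymm
  · intro x hx
    simp only [Set.mem_iUnion] at hx
    obtain ⟨q, hq, hxq⟩ := hx
    obtain ⟨m, hmax, hsub⟩ := exists_max hbd hq
    exact ⟨cb m, ⟨m, hmax, rfl⟩, hsub hxq⟩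
  · rintro x ⟨s, ⟨m, hmax, rfl⟩, hxs⟩
    simp only [Set.mem_iUnion]
    exact ⟨m, hmax.1, hxs⟩

lemma sUnion_max_pairwise (P : Q n → Prop) :
    (cb '' {q : Q n | IsMax P q}).Pairwise Disjoint := by
  rintro s ⟨q, hq, rfl⟩ t ⟨q', hq', rfl⟩ hne
  exact max_disjoint hq hq' hne

/-- Weak-type bound for the dyadic maximal operator, arbitrary Borel measure. -/
lemma weak_type (μ : Measure (Fin n → ℝ)) (g : (Fin n → ℝ) → ℝ≥0∞) (lam : ℝ≥0∞) :
    lam * μ (⋃ (q : Q n) (_ : lam < avgl μ g q), cb q) ≤ ∫⁻ x, g x ∂μ := by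
  set P : Q n → Prop := fun q => lam < avgl μ g q with hP
  have key : ∀ N : ℤ, lam * μ (⋃ (q : Q n) (_ : P q ∧ q.1 ≤ N), cb q) ≤ ∫⁻ x, g x ∂μ := by
    intro N
    set PN : Q n → Prop := fun q => P q ∧ q.1 ≤ N with hPN
    set C : Set (Set (Fin n → ℝ)) := cb '' {q : Q n | IsMax PN q} with hC
    have hCcount : C.Countable := (Set.to_countable _).image _
    haveI := hCcount.to_subtype
    have hCmeas : ∀ s ∈ C, MeasurableSet s := by
      rintro s ⟨q, _, rfl⟩; exact measurableSet_cb q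
    have hU : (⋃ (q : Q n) (_ : PN q), cb q) = ⋃₀ C :=
      union_eq_sUnion_max PN N (fun q hq => hq.2)
    rw [hU, measure_sUnion hCcount (sUnion_max_pairwise PN) hCmeas]
    calc lam * ∑' s : C, μ s = ∑' s : C, lam * μ (s : Set _) := ENNReal.tsum_mul_left.symm
      _ ≤ ∑' s : C, ∫⁻ x in (s : Set _), g x ∂μ := by
          refine ENNReal.tsum_le_tsum fun s => ?_
          obtain ⟨q, hq, hqs⟩ := s.2
          rw [← hqs]
          exact mul_meas_le hq.1.1
      _ = ∫⁻ x in ⋃₀ C, g x ∂μ := by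
          rw [Set.sUnion_eq_iUnion]
          refine (lintegral_iUnion (s := fun s : ↥C => (s : Set (Fin n → ℝ)))
            (fun s => hCmeas s s.2) ?_ g).symm
          intro s t hst
          exact (sUnion_max_pairwise PN) s.2 t.2 (fun h => hst (Subtype.ext h))
      _ ≤ ∫⁻ x, g x ∂μ := setLIntegral_le_lintegral _ _
  have hE : (⋃ (q : Q n) (_ : P q), cb q)
      = ⋃ N : ℤ, ⋃ (q : Q n) (_ : P q ∧ q.1 ≤ N), cb q := by
    apply subset_antisymm
    · intro x hx
      simp only [Set.mem_iUnion] at hx ⊢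
      obtain ⟨q, hq, hxq⟩ := hx
      exact ⟨q.1, q, ⟨hq, le_rfl⟩, hxq⟩
    · intro x hx
      simp only [Set.mem_iUnion] at hx ⊢
      obtain ⟨N, q, hq, hxq⟩ := hx
      exact ⟨q, hq.1, hxq⟩
  have hmono : Monotone (fun N : ℤ => ⋃ (q : Q n) (_ : P q ∧ q.1 ≤ N), cb q) := by
    intro N M hNM
    refine Set.iUnion_mono fun q => Set.iUnion_subset fun hq => ?_
    exact Set.subset_iUnion_of_subset ⟨hq.1, hq.2.trans hNM⟩ subset_rfl
  rw [hE, (hmono.directed_le).measure_iUnion, ENNReal.mul_iSup]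
  exact iSup_le key

/-- Carleson-condition transfer: the Carleson condition on cubes extends to
the union of an arbitrary subfamily of cubes. -/
lemma carleson_transfer (μ : Measure (Fin n → ℝ)) (A : Q n → (Fin n → ℝ) → ℝ)
    (hAm : ∀ q, Measurable (A q)) (hAs : ∀ q, ∀ x ∉ cb q, A q x = 0)
    {p : ℝ} (hp : 0 < p) (CC : ℝ≥0∞)
    (hCar : ∀ (kQ : ℤ) (cQ : Fin n → ℤ),
      ∫⁻ x in dyadicCube n kQ cQ,
        (∑' S : {q : Q n // dyadicCube n q.1 q.2 ⊆ dyadicCube n kQ cQ},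
          (‖A S.1 x‖₊ : ℝ≥0∞) ^ 2) ^ (p / 2) ∂μ ≤ CC * μ (dyadicCube n kQ cQ))
    (P : Q n → Prop) :
    ∫⁻ x, (∑' q : Q n, (if P q then (‖A q x‖₊ : ℝ≥0∞) ^ 2 else 0)) ^ (p / 2) ∂μ
      ≤ CC * μ (⋃ (q : Q n) (_ : P q), cb q) := by
  classical
  have hp2 : (0:ℝ) < p / 2 := by positivity
  set w : Q n → (Fin n → ℝ) → ℝ≥0∞ := fun q x => (‖A q x‖₊ : ℝ≥0∞) ^ 2 with hw
  have hwm : ∀ q, Measurable (w q) := fun q =>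
    ((hAm q).nnnorm.coe_nnreal_ennreal).pow_const 2
  set U : Set (Fin n → ℝ) := ⋃ (q : Q n) (_ : P q), cb q with hUdef
  set FN : ℤ → (Fin n → ℝ) → ℝ≥0∞ :=
    fun N x => ∑' q : Q n, (if P q ∧ q.1 ≤ N then w q x else 0) with hFN
  have hFNm : ∀ N, Measurable (FN N) := by
    intro N
    refine Measurable.ennreal_tsum fun q => ?_
    by_cases h : P q ∧ q.1 ≤ N
    · simpa [h] using hwm q
    · simp [h]
  -- step (ii): the truncated estimate
  have key : ∀ N : ℤ, ∫⁻ x, (FN N x) ^ (p / 2) ∂μ ≤ CC * μ U := by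
    intro N
    set PN : Q n → Prop := fun q => P q ∧ q.1 ≤ N with hPN
    set C : Set (Set (Fin n → ℝ)) := cb '' {q : Q n | IsMax PN q} with hC
    have hCcount : C.Countable := (Set.to_countable _).image _
    haveI := hCcount.to_subtype
    have hCmeas : ∀ s ∈ C, MeasurableSet s := by
      rintro s ⟨q, _, rfl⟩; exact measurableSet_cb q
    set UN : Set (Fin n → ℝ) := ⋃ (q : Q n) (_ : PN q), cb q with hUN
    have hUNC : UN = ⋃₀ C := union_eq_sUnion_max PN N (fun q hq => hq.2)
    have hUNsub : UN ⊆ U := by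
      refine Set.iUnion_mono fun q => Set.iUnion_subset fun hq => ?_
      exact Set.subset_iUnion_of_subset hq.1 subset_rfl
    have hmem : ∀ q x, w q x ≠ 0 → x ∈ cb q := by
      intro q x h0
      by_contra hxq
      exact h0 (by simp [hw, hAs q x hxq])
    have hzero : ∀ x ∉ UN, FN N x = 0 := by
      intro x hx
      refine ENNReal.tsum_eq_zero.mpr fun q => ?_
      by_cases h : PN q
      · rw [if_pos h]
        by_contra h0
        exact hx (Set.mem_iUnion.2 ⟨q, Set.mem_iUnion.2 ⟨h, hmem q x h0⟩⟩)
      · exact if_neg h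
    have hind : (fun x => FN N x ^ (p / 2)) = UN.indicator (fun x => FN N x ^ (p / 2)) := by
      funext x
      by_cases hx : x ∈ UN
      · rw [Set.indicator_of_mem hx]
      · rw [Set.indicator_of_notMem hx, hzero x hx, ENNReal.zero_rpow_of_pos hp2]
    calc ∫⁻ x, (FN N x) ^ (p / 2) ∂μ
        = ∫⁻ x in UN, (FN N x) ^ (p / 2) ∂μ := by
          conv_lhs => rw [hind]
          exact lintegral_indicator (measurableSet_biUnion PN) _
      _ = ∑' s : ↥C, ∫⁻ x in (s : Set _), (FN N x) ^ (p / 2) ∂μ := by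
          rw [hUNC, Set.sUnion_eq_iUnion]
          exact lintegral_iUnion (s := fun s : ↥C => (s : Set (Fin n → ℝ)))
            (fun s => hCmeas s s.2) (fun s t hst =>
              (sUnion_max_pairwise PN) s.2 t.2 (fun h => hst (Subtype.ext h))) _
      _ ≤ ∑' s : ↥C, CC * μ (s : Set _) := by
          refine ENNReal.tsum_le_tsum fun s => ?_
          obtain ⟨m, hmax, hms⟩ := s.2
          have hsm : (s : Set (Fin n → ℝ)) = cb m := hms.symm
          rw [hsm]
          have hpt : ∀ x ∈ cb m, FN N x ≤
              ∑' S : {q : Q n // cb q ⊆ cb m}, w S.1 x := by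
            intro x hx
            rw [show (∑' S : {q : Q n // cb q ⊆ cb m}, w S.1 x)
                = ∑' q : Q n, Set.indicator {q : Q n | cb q ⊆ cb m} (fun q => w q x) q
              from tsum_subtype (s := {q : Q n | cb q ⊆ cb m}) (f := fun q => w q x)]
            refine ENNReal.tsum_le_tsum fun q => ?_
            by_cases h : PN q
            · rw [if_pos h]
              rcases eq_or_ne (w q x) 0 with h0 | h0
              · rw [h0]; exact zero_le
              · have hxq : x ∈ cb q := hmem q x h0
                obtain ⟨m', hmax', hsub'⟩ := exists_max (fun q hq => hq.2) h
                have hcbm : cb m' = cb m := by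
                  by_contra hne
                  exact Set.disjoint_left.1 (max_disjoint hmax' hmax hne)
                    (hsub' hxq) hx
                exact le_of_eq (Set.indicator_of_mem
                  (show q ∈ {q : Q n | cb q ⊆ cb m} from hcbm ▸ hsub') (fun q => w q x)).symm
            · rw [if_neg h]; exact zero_le
          calc ∫⁻ x in cb m, (FN N x) ^ (p / 2) ∂μ
              ≤ ∫⁻ x in cb m, (∑' S : {q : Q n // cb q ⊆ cb m}, w S.1 x) ^ (p / 2) ∂μ := by
                refine setLIntegral_mono' (measurableSet_cb m) fun x hx => ?_
                exact ENNReal.rpow_le_rpow (hpt x hx) hp2.le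
            _ ≤ CC * μ (cb m) := hCar m.1 m.2
      _ = CC * μ UN := by
          rw [ENNReal.tsum_mul_left, hUNC,
            measure_sUnion hCcount (sUnion_max_pairwise PN) hCmeas]
      _ ≤ CC * μ U := mul_le_mul_right (measure_mono hUNsub) _
  -- step (i): monotone convergence in the truncation
  have hFsup : ∀ x, (∑' q : Q n, (if P q then w q x else 0)) = ⨆ N : ℤ, FN N x := by
    intro x
    apply le_antisymm
    · rw [ENNReal.tsum_eq_iSup_sum]
      refine iSup_le fun s => ?_
      rcases s.eq_empty_or_nonempty with rfl | hne
      · simp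
      · set N : ℤ := s.sup' hne (fun q => q.1) with hN
        calc ∑ q ∈ s, (if P q then w q x else 0)
            ≤ ∑ q ∈ s, (if P q ∧ q.1 ≤ N then w q x else 0) := by
              refine Finset.sum_le_sum fun q hq => ?_
              by_cases h : P q
              · rw [if_pos h, if_pos ⟨h, Finset.le_sup' (fun q : Q n => q.1) hq⟩]
              · rw [if_neg h, if_neg (fun h' => h h'.1)]
          _ ≤ FN N x := ENNReal.sum_le_tsum s
          _ ≤ ⨆ N : ℤ, FN N x := le_iSup (fun N : ℤ => FN N x) N
    · refine iSup_le fun N => ENNReal.tsum_le_tsum fun q => ?_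
      by_cases h : P q
      · by_cases h' : q.1 ≤ N
        · rw [if_pos ⟨h, h'⟩, if_pos h]
        · rw [if_neg (fun hc => h' hc.2)]; exact zero_le
      · rw [if_neg (fun hc => h hc.1), if_neg h]
  have hFNmono : Monotone fun N : ℤ => (fun x => (FN N x) ^ (p / 2)) := by
    intro N M hNM
    intro x
    refine ENNReal.rpow_le_rpow (ENNReal.tsum_le_tsum fun q => ?_) hp2.le
    by_cases h : P q ∧ q.1 ≤ N
    · rw [if_pos h, if_pos ⟨h.1, h.2.trans hNM⟩]
    · rw [if_neg h]; exact zero_le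
  calc ∫⁻ x, (∑' q : Q n, (if P q then (‖A q x‖₊ : ℝ≥0∞) ^ 2 else 0)) ^ (p / 2) ∂μ
      = ∫⁻ x, ⨆ N : ℤ, (FN N x) ^ (p / 2) ∂μ := by
        refine lintegral_congr fun x => ?_
        rw [show (∑' q : Q n, (if P q then (‖A q x‖₊ : ℝ≥0∞) ^ 2 else 0))
            = ∑' q : Q n, (if P q then w q x else 0) from rfl, hFsup x]
        exact rpow_iSup _ hp2
    _ = ⨆ N : ℤ, ∫⁻ x, (FN N x) ^ (p / 2) ∂μ := by
        refine lintegral_iSup_directed (fun N => ?_) hFNmono.directed_le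
        exact ((ENNReal.continuous_rpow_const.measurable).comp (hFNm N)).aemeasurable
    _ ≤ CC * μ U := iSup_le key

end Dyad

namespace Dyad

variable {n : ℕ} {μ : Measure (Fin n → ℝ)}

lemma setLIntegral_nnnorm_ne_top {f : (Fin n → ℝ) → ℝ} (hfm : Measurable f) {p : ℝ}
    (hp : 1 < p) (hfp : ∫⁻ x, (‖f x‖₊ : ℝ≥0∞) ^ p ∂μ ≠ ∞)
    {s : Set (Fin n → ℝ)} (hs : μ s ≠ ∞) :
    ∫⁻ x in s, (‖f x‖₊ : ℝ≥0∞) ∂μ ≠ ∞ := by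
  have hp0 : (0:ℝ) < p := lt_trans one_pos hp
  have hp1 : (0:ℝ) < p - 1 := by linarith
  have hpq : p.HolderConjugate (p / (p - 1)) := Real.HolderConjugate.conjExponent hp
  have hφm : Measurable fun x => (‖f x‖₊ : ℝ≥0∞) := hfm.nnnorm.coe_nnreal_ennreal
  have h := ENNReal.lintegral_mul_le_Lp_mul_Lq (μ.restrict s) hpq
    hφm.aemeasurable (aemeasurable_const (b := (1:ℝ≥0∞)))
  simp only [Pi.mul_apply, mul_one, ENNReal.one_rpow, lintegral_const, one_mul] at h
  refine ne_top_of_le_ne_top ?_ h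
  have h1 : ∫⁻ x in s, (‖f x‖₊ : ℝ≥0∞) ^ p ∂μ ≤ ∫⁻ x, (‖f x‖₊ : ℝ≥0∞) ^ p ∂μ :=
    setLIntegral_le_lintegral _ _
  have hfin1 : (∫⁻ x in s, (‖f x‖₊ : ℝ≥0∞) ^ p ∂μ) ^ (1 / p) ≠ ∞ :=
    ENNReal.rpow_ne_top_of_nonneg (div_nonneg zero_le_one hp0.le)
      (ne_top_of_le_ne_top hfp h1)
  have hfin2 : (μ.restrict s Set.univ) ^ (1 / (p / (p - 1))) ≠ ∞ := by
    refine ENNReal.rpow_ne_top_of_nonneg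
      (div_nonneg zero_le_one (div_pos hp0 hp1).le) ?_
    rw [Measure.restrict_apply_univ]
    exact hs
  exact ENNReal.mul_ne_top hfin1 hfin2

lemma ofReal_cubeAvg_le {f : (Fin n → ℝ) → ℝ} (hfm : Measurable f) {p : ℝ}
    (hp : 1 < p) (hfp : ∫⁻ x, (‖f x‖₊ : ℝ≥0∞) ^ p ∂μ ≠ ∞) (q : Q n) :
    ENNReal.ofReal |cubeAvg μ f q| ≤ avgl μ (fun x => (‖f x‖₊ : ℝ≥0∞)) q := by
  set s := cb q with hs
  set m := μ s with hm
  rcases eq_or_ne m 0 with h0 | h0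
  · rw [cubeAvg, show (μ (dyadicCube n q.1 q.2)) = 0 from h0]
    simp
  rcases eq_or_ne m ∞ with htop | htop
  · rw [cubeAvg, show (μ (dyadicCube n q.1 q.2)) = ⊤ from htop]
    simp
  have hI : ∫⁻ x in s, (‖f x‖₊ : ℝ≥0∞) ∂μ ≠ ∞ :=
    setLIntegral_nnnorm_ne_top hfm hp hfp htop
  have hint : Integrable f (μ.restrict s) := by
    refine ⟨hfm.aestronglyMeasurable, ?_⟩
    exact lt_top_iff_ne_top.2 hI
  have h1 : |cubeAvg μ f q| ≤ m.toReal⁻¹ * ∫ y in s, ‖f y‖ ∂μ := by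
    rw [cubeAvg, abs_mul, abs_inv, abs_of_nonneg ENNReal.toReal_nonneg]
    refine mul_le_mul_of_nonneg_left ?_ (by positivity)
    calc |∫ y in s, f y ∂μ| = ‖∫ y in s, f y ∂μ‖ := (Real.norm_eq_abs _).symm
      _ ≤ ∫ y in s, ‖f y‖ ∂μ := norm_integral_le_integral_norm _
  calc ENNReal.ofReal |cubeAvg μ f q|
      ≤ ENNReal.ofReal (m.toReal⁻¹ * ∫ y in s, ‖f y‖ ∂μ) := ENNReal.ofReal_le_ofReal h1
    _ = ENNReal.ofReal m.toReal⁻¹ * ENNReal.ofReal (∫ y in s, ‖f y‖ ∂μ) :=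
        ENNReal.ofReal_mul (by positivity)
    _ = m⁻¹ * ∫⁻ y in s, (‖f y‖₊ : ℝ≥0∞) ∂μ := by
        rw [ofReal_integral_norm_eq_lintegral_enorm hint,
          ENNReal.ofReal_inv_of_pos (ENNReal.toReal_pos h0 htop),
          ENNReal.ofReal_toReal htop]
        simp only [enorm_eq_nnnorm]
    _ = avgl μ (fun x => (‖f x‖₊ : ℝ≥0∞)) q := rfl

lemma avgl_zero_of_meas_zero {g : (Fin n → ℝ) → ℝ≥0∞} {q : Q n} (h : μ (cb q) = 0) :
    avgl μ g q = 0 := by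
  rw [avgl, Measure.restrict_eq_zero.2 h]
  simp

lemma avgl_mono {g g' : (Fin n → ℝ) → ℝ≥0∞} (h : ∀ x, g x ≤ g' x) (q : Q n) :
    avgl μ g q ≤ avgl μ g' q :=
  mul_le_mul_right (lintegral_mono h) _

lemma avgl_add_const_le {g : (Fin n → ℝ) → ℝ≥0∞} (hg : Measurable g) (c : ℝ≥0∞) (q : Q n) :
    avgl μ (fun x => g x + c) q ≤ avgl μ g q + c := by
  set s := cb q
  set m := μ s with hm
  rcases eq_or_ne m 0 with h0 | h0
  · calc avgl μ (fun x => g x + c) q = 0 := avgl_zero_of_meas_zero h0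
      _ ≤ _ := zero_le
  rcases eq_or_ne m ∞ with htop | htop
  · rw [avgl, ← hm, htop]
    simp
  rw [avgl, lintegral_add_right _ measurable_const]
  rw [mul_add]
  refine add_le_add_right ?_ _
  rw [setLIntegral_const, ← hm, mul_comm c m, ← mul_assoc]
  rw [ENNReal.inv_mul_cancel h0 htop, one_mul]

lemma rpow_tsum_le {ι : Type*} [Countable ι] (a : ι → ℝ≥0∞) {c : ℝ}
    (h0 : 0 < c) (h1 : c ≤ 1) : (∑' i, a i) ^ c ≤ ∑' i, (a i) ^ c := by
  classical
  rw [ENNReal.tsum_eq_iSup_sum, rpow_iSup _ h0]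
  refine iSup_le fun s => ?_
  calc (∑ i ∈ s, a i) ^ c ≤ ∑ i ∈ s, (a i) ^ c := by
        induction s using Finset.cons_induction with
        | empty => simp [ENNReal.zero_rpow_of_pos h0]
        | cons i s his ih =>
            rw [Finset.sum_cons, Finset.sum_cons]
            exact le_trans (ENNReal.rpow_add_le_add_rpow _ _ h0.le h1)
              (add_le_add_right ih _)
    _ ≤ ∑' i, (a i) ^ c := ENNReal.sum_le_tsum s

end Dyad

namespace Dyad

variable {n : ℕ}

lemma main_estimate {p : ℝ} (hp : 1 < p) (hp2 : p ≤ 2)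
    (μ : Measure (Fin n → ℝ)) (A : Q n → (Fin n → ℝ) → ℝ) (Car : ℝ) (hCar0 : 0 ≤ Car)
    (hAm : ∀ q, Measurable (A q)) (hAs : ∀ q, ∀ x ∉ cb q, A q x = 0)
    (hCar : ∀ (kQ : ℤ) (cQ : Fin n → ℤ),
      ∫⁻ x in dyadicCube n kQ cQ,
        (∑' S : {q : Q n // dyadicCube n q.1 q.2 ⊆ dyadicCube n kQ cQ},
          (‖A S.1 x‖₊ : ℝ≥0∞) ^ 2) ^ (p / 2) ∂μ ≤
        ENNReal.ofReal (Car ^ p) * μ (dyadicCube n kQ cQ))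
    (f : (Fin n → ℝ) → ℝ) (hfm : Measurable f)
    (hfp : ∫⁻ x, (‖f x‖₊ : ℝ≥0∞) ^ p ∂μ ≠ ∞) :
    ∫⁻ x, (∑' q : Q n,
        (ENNReal.ofReal |cubeAvg μ f q|) ^ 2 * (‖A q x‖₊ : ℝ≥0∞) ^ 2) ^ (p / 2) ∂μ ≤
      ENNReal.ofReal ((4 * (1 - 2 ^ (1 - p))⁻¹ * Car) ^ p) *
        ∫⁻ x, (‖f x‖₊ : ℝ≥0∞) ^ p ∂μ := by
  classical
  have hp0 : (0:ℝ) < p := lt_trans one_pos hp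
  have hp2pos : (0:ℝ) < p / 2 := by linarith
  have hp2le : p / 2 ≤ 1 := by linarith
  set pw : ℝ → ℝ≥0∞ := fun r => (2:ℝ≥0∞) ^ r with hpw
  have h2ne0 : (2:ℝ≥0∞) ≠ 0 := by norm_num
  have h2netop : (2:ℝ≥0∞) ≠ ∞ := by norm_num
  have hpw_add : ∀ a b : ℝ, pw (a + b) = pw a * pw b := fun a b =>
    ENNReal.rpow_add a b h2ne0 h2netop
  have hpw_mono : ∀ {a b : ℝ}, a ≤ b → pw a ≤ pw b := fun h =>
    ENNReal.rpow_le_rpow_of_exponent_le one_le_two h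
  have hpw_one : pw 1 = 2 := by
    show (2:ℝ≥0∞) ^ (1:ℝ) = 2
    exact ENNReal.rpow_one 2
  have hpw_zero : pw 0 = 1 := by
    show (2:ℝ≥0∞) ^ (0:ℝ) = 1
    exact ENNReal.rpow_zero
  have hpw_mul : ∀ a b : ℝ, pw (a * b) = (pw a) ^ b := fun a b => by
    show (2:ℝ≥0∞) ^ (a * b) = ((2:ℝ≥0∞) ^ a) ^ b
    exact ENNReal.rpow_mul 2 a b
  have hpw_coe : ∀ m : ℤ, (((2:ℝ≥0) ^ m : ℝ≥0) : ℝ≥0∞) = pw (m : ℝ) := by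
    intro m
    rw [ENNReal.coe_zpow (by norm_num) m]
    show ((2:ℝ≥0) : ℝ≥0∞) ^ m = (2:ℝ≥0∞) ^ ((m : ℤ) : ℝ)
    rw [ENNReal.rpow_intCast]
    norm_num
  set φ : (Fin n → ℝ) → ℝ≥0∞ := fun x => (‖f x‖₊ : ℝ≥0∞) with hφ
  have hφm : Measurable φ := hfm.nnnorm.coe_nnreal_ennreal
  have hφtop : ∀ x, φ x ≠ ∞ := fun x => ENNReal.coe_ne_top
  set av : Q n → ℝ≥0∞ := fun q => avgl μ φ q with hav
  have hav_netop : ∀ q, av q ≠ ∞ := by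
    intro q
    show avgl μ φ q ≠ ⊤
    rcases eq_or_ne (μ (cb q)) 0 with h0 | h0
    · rw [avgl_zero_of_meas_zero h0]
      exact ENNReal.zero_ne_top
    rcases eq_or_ne (μ (cb q)) ∞ with ht | ht
    · rw [avgl, ht]
      simp
    · exact ENNReal.mul_ne_top (ENNReal.inv_ne_top.2 h0)
        (setLIntegral_nnnorm_ne_top hfm hp hfp ht)
  have havle : ∀ q, ENNReal.ofReal |cubeAvg μ f q| ≤ av q := fun q =>
    ofReal_cubeAvg_le hfm hp hfp q
  -- selection of a dyadic scale for each `x` or each average value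
  have hselect : ∀ t : ℝ≥0∞, t ≠ 0 → t ≠ ∞ → ∃ j : ℤ, pw (j : ℝ) < t ∧ t ≤ pw ((j : ℝ) + 1) := by
    intro t ht0 httop
    have hnn : 0 < t.toNNReal := by
      rw [pos_iff_ne_zero]
      intro hzero
      rw [ENNReal.toNNReal_eq_zero_iff] at hzero
      rcases hzero with h | h
      exacts [ht0 h, httop h]
    obtain ⟨j, hj1, hj2⟩ := exists_mem_Ioc_zpow hnn (by norm_num : (1:ℝ≥0) < 2)
    refine ⟨j, ?_, ?_⟩
    · rw [← ENNReal.coe_toNNReal httop, ← hpw_coe j]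
      exact_mod_cast hj1
    · rw [← ENNReal.coe_toNNReal httop]
      have := hpw_coe (j + 1)
      push_cast at this
      rw [← this]
      exact_mod_cast hj2
  set P : ℤ → Q n → Prop := fun j q => pw (j : ℝ) < av q ∧ av q ≤ pw ((j : ℝ) + 1) with hPdef
  set w : Q n → (Fin n → ℝ) → ℝ≥0∞ := fun q x => (‖A q x‖₊ : ℝ≥0∞) ^ 2 with hwdef
  have hwm : ∀ q, Measurable (w q) := fun q =>
    ((hAm q).nnnorm.coe_nnreal_ennreal).pow_const 2
  set F : ℤ → (Fin n → ℝ) → ℝ≥0∞ :=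
    fun j x => ∑' q : Q n, (@ite _ (P j q) (Classical.propDecidable _) (w q x) 0) with hFdef
  have hFm : ∀ j, Measurable (F j) := by
    intro j
    refine Measurable.ennreal_tsum fun q => ?_
    by_cases h : P j q
    · simp only [if_pos h]; exact hwm q
    · simp only [if_neg h]; exact measurable_const
  -- term-by-term upper bound by dyadic levels
  have hterm : ∀ q x, (ENNReal.ofReal |cubeAvg μ f q|) ^ 2 * w q x
      ≤ ∑' j : ℤ, (if P j q then pw (2 * (j : ℝ) + 2) * w q x else 0) := by
    intro q x
    rcases eq_or_ne (av q) 0 with h0 | h0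
    · have hz : ENNReal.ofReal |cubeAvg μ f q| = 0 :=
        le_antisymm (h0 ▸ havle q) (zero_le)
      rw [hz]
      simp
    · obtain ⟨j, hj1, hj2⟩ := hselect (av q) h0 (hav_netop q)
      have hPj : P j q := ⟨hj1, hj2⟩
      calc (ENNReal.ofReal |cubeAvg μ f q|) ^ 2 * w q x
          ≤ (av q) ^ 2 * w q x := mul_le_mul_left (pow_le_pow_left' (havle q) 2) _
        _ ≤ pw (2 * (j : ℝ) + 2) * w q x := by
            refine mul_le_mul_left ?_ _
            refine le_trans (pow_le_pow_left' hj2 2) (le_of_eq ?_)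
            rw [pow_two, ← hpw_add]
            congr 1
            ring
        _ = (if P j q then pw (2 * (j : ℝ) + 2) * w q x else 0) := (if_pos hPj).symm
        _ ≤ ∑' j : ℤ, (if P j q then pw (2 * (j : ℝ) + 2) * w q x else 0) :=
            ENNReal.le_tsum j
  have hT : ∀ x, (∑' q : Q n, (ENNReal.ofReal |cubeAvg μ f q|) ^ 2 * w q x)
      ≤ ∑' j : ℤ, pw (2 * (j : ℝ) + 2) * F j x := by
    intro x
    calc ∑' q : Q n, (ENNReal.ofReal |cubeAvg μ f q|) ^ 2 * w q x
        ≤ ∑' q : Q n, ∑' j : ℤ, (if P j q then pw (2 * (j : ℝ) + 2) * w q x else 0) :=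
          ENNReal.tsum_le_tsum fun q => hterm q x
      _ = ∑' j : ℤ, ∑' q : Q n, (if P j q then pw (2 * (j : ℝ) + 2) * w q x else 0) :=
          ENNReal.tsum_comm
      _ = ∑' j : ℤ, pw (2 * (j : ℝ) + 2) * F j x := by
          refine tsum_congr fun j => ?_
          rw [hFdef, ← ENNReal.tsum_mul_left]
          refine tsum_congr fun q => ?_
          by_cases h : P j q
          · rw [if_pos h, if_pos h]
          · rw [if_neg h, if_neg h, mul_zero]
  have hFrm : ∀ j : ℤ, Measurable fun x => (F j x) ^ (p / 2) := fun j =>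
    (ENNReal.continuous_rpow_const.measurable).comp (hFm j)
  have hmain1 : ∫⁻ x, (∑' q : Q n,
        (ENNReal.ofReal |cubeAvg μ f q|) ^ 2 * w q x) ^ (p / 2) ∂μ
      ≤ ∑' j : ℤ, pw (((j : ℝ) + 1) * p) * ∫⁻ x, (F j x) ^ (p / 2) ∂μ := by
    have hmulrw : ∀ (j : ℤ) (x : Fin n → ℝ),
        (pw (2 * (j : ℝ) + 2) * F j x) ^ (p / 2)
          = pw (((j : ℝ) + 1) * p) * (F j x) ^ (p / 2) := by
      intro j x
      rw [ENNReal.mul_rpow_of_nonneg _ _ hp2pos.le]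
      congr 1
      rw [← hpw_mul]
      congr 1
      ring
    calc ∫⁻ x, (∑' q : Q n,
          (ENNReal.ofReal |cubeAvg μ f q|) ^ 2 * w q x) ^ (p / 2) ∂μ
        ≤ ∫⁻ x, (∑' j : ℤ, pw (2 * (j : ℝ) + 2) * F j x) ^ (p / 2) ∂μ :=
          lintegral_mono fun x => ENNReal.rpow_le_rpow (hT x) hp2pos.le
      _ ≤ ∫⁻ x, ∑' j : ℤ, (pw (2 * (j : ℝ) + 2) * F j x) ^ (p / 2) ∂μ :=
          lintegral_mono fun x => rpow_tsum_le _ hp2pos hp2le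
      _ = ∑' j : ℤ, ∫⁻ x, (pw (2 * (j : ℝ) + 2) * F j x) ^ (p / 2) ∂μ := by
          refine lintegral_tsum fun j => ?_
          refine Measurable.aemeasurable ?_
          exact (ENNReal.continuous_rpow_const.measurable).comp
            ((hFm j).const_mul _)
      _ = ∑' j : ℤ, pw (((j : ℝ) + 1) * p) * ∫⁻ x, (F j x) ^ (p / 2) ∂μ := by
          refine tsum_congr fun j => ?_
          simp_rw [hmulrw j]
          exact lintegral_const_mul _ (hFrm j)
  have hcarl : ∀ j : ℤ, ∫⁻ x, (F j x) ^ (p / 2) ∂μ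
      ≤ ENNReal.ofReal (Car ^ p) * μ (⋃ (q : Q n) (_ : P j q), cb q) := by
    intro j
    simp only [hFdef]
    exact carleson_transfer μ A hAm hAs hp0 _ hCar (P j)
  -- the truncated functions and the weak-type bound
  set g : ℤ → (Fin n → ℝ) → ℝ≥0∞ :=
    fun j x => if pw ((j : ℝ) - 1) < φ x then φ x else 0 with hgdef
  have hgm : ∀ j, Measurable (g j) := by
    intro j
    exact Measurable.ite (hφm measurableSet_Ioi) hφm measurable_const
  have hweak : ∀ j : ℤ, μ (⋃ (q : Q n) (_ : P j q), cb q)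
      ≤ pw (1 - (j : ℝ)) * ∫⁻ x, g j x ∂μ := by
    intro j
    have hsub : (⋃ (q : Q n) (_ : P j q), cb q)
        ⊆ ⋃ (q : Q n) (_ : pw ((j : ℝ) - 1) < avgl μ (g j) q), cb q := by
      refine Set.iUnion_mono fun q => Set.iUnion_subset fun hq => ?_
      refine Set.subset_iUnion_of_subset ?_ subset_rfl
      by_contra hle
      push_neg at hle
      have hφle : ∀ x, φ x ≤ g j x + pw ((j : ℝ) - 1) := by
        intro x
        by_cases hx : pw ((j : ℝ) - 1) < φ x
        · simp only [hgdef]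
          rw [if_pos hx]
          exact le_self_add
        · push_neg at hx
          exact le_add_left hx
      have h1 : av q ≤ avgl μ (g j) q + pw ((j : ℝ) - 1) :=
        le_trans (avgl_mono hφle q) (avgl_add_const_le (hgm j) _ q)
      have h2 : av q ≤ pw (j : ℝ) := by
        refine le_trans h1 ?_
        calc avgl μ (g j) q + pw ((j : ℝ) - 1)
            ≤ pw ((j : ℝ) - 1) + pw ((j : ℝ) - 1) := add_le_add_left hle _
          _ = pw 1 * pw ((j : ℝ) - 1) := by
              rw [hpw_one, two_mul]
          _ = pw (j : ℝ) := by
              rw [← hpw_add]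
              congr 1
              ring
      exact absurd hq.1 (not_lt.2 h2)
    refine le_trans (measure_mono hsub) ?_
    have hE := weak_type μ (g j) (pw ((j : ℝ) - 1))
    calc μ (⋃ (q : Q n) (_ : pw ((j : ℝ) - 1) < avgl μ (g j) q), cb q)
        = pw (1 - (j : ℝ)) * (pw ((j : ℝ) - 1) *
            μ (⋃ (q : Q n) (_ : pw ((j : ℝ) - 1) < avgl μ (g j) q), cb q)) := by
          rw [← mul_assoc, ← hpw_add]
          have he : (1 - (j : ℝ)) + ((j : ℝ) - 1) = 0 := by ring
          rw [he, hpw_zero, one_mul]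
      _ ≤ pw (1 - (j : ℝ)) * ∫⁻ x, g j x ∂μ := mul_le_mul_right hE _
  -- pointwise geometric-series bound
  set κ : ℝ≥0∞ := (1 - pw (1 - p))⁻¹ with hκ
  have hpoint : ∀ x, (∑' j : ℤ, pw (((j : ℝ) + 1) * p + (1 - (j : ℝ))) * g j x)
      ≤ pw (2 * p) * κ * φ x ^ p := by
    intro x
    rcases eq_or_ne (φ x) 0 with h0 | h0
    · have hz : ∀ j : ℤ, g j x = 0 := by
        intro j
        simp only [hgdef]
        rw [if_neg (by rw [h0]; exact not_lt.2 (zero_le))]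
      simp [hz]
    · obtain ⟨j', hJ1', hJ2'⟩ := hselect (φ x) h0 (hφtop x)
      set J : ℤ := j' + 1 with hJdef
      have hJ1 : pw ((J : ℝ) - 1) < φ x := by
        have he : ((J : ℝ) - 1) = (j' : ℝ) := by rw [hJdef]; push_cast; ring
        rw [he]; exact hJ1'
      have hJ2 : φ x ≤ pw (J : ℝ) := by
        have he : (J : ℝ) = (j' : ℝ) + 1 := by rw [hJdef]; push_cast; ring
        rw [he]; exact hJ2'
      have hg_eq : ∀ j : ℤ, g j x = if j ≤ J then φ x else 0 := by
        intro j
        simp only [hgdef]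
        by_cases hj : j ≤ J
        · rw [if_pos hj, if_pos]
          have hjJ : (j : ℝ) ≤ (J : ℝ) := by exact_mod_cast hj
          exact lt_of_le_of_lt (hpw_mono (by linarith)) hJ1
        · rw [if_neg hj, if_neg]
          push_neg at hj
          have hjJ : (J : ℝ) + 1 ≤ (j : ℝ) := by
            exact_mod_cast Int.add_one_le_iff.mpr hj
          exact not_lt.2 (le_trans hJ2 (hpw_mono (by linarith)))
      set h : ℤ → ℝ≥0∞ := fun j => pw (((j : ℝ) + 1) * p + (1 - (j : ℝ))) * g j x with hhdef
      have hinj : Function.Injective (fun m : ℕ => J - (m : ℤ)) := by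
        intro a b hab
        simp only at hab
        omega
      have hsupp : Function.support h ⊆ Set.range (fun m : ℕ => J - (m : ℤ)) := by
        intro j hj
        have hgne : g j x ≠ 0 := by
          intro h'
          exact hj (by simp only [hhdef, h', mul_zero])
        have hjJ : j ≤ J := by
          by_contra hc
          exact hgne (by rw [hg_eq j, if_neg hc])
        refine ⟨(J - j).toNat, ?_⟩
        show J - ((J - j).toNat : ℤ) = j
        omega
      rw [← hinj.tsum_eq hsupp]
      have hval : ∀ m : ℕ, h (J - (m : ℤ))
          = pw (((J : ℝ) + 1) * p + (1 - (J : ℝ))) * φ x * (pw (1 - p)) ^ m := by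
        intro m
        simp only [hhdef]
        rw [hg_eq (J - (m : ℤ)), if_pos (by omega : J - (m : ℤ) ≤ J)]
        have hexp : (((J - (m : ℤ) : ℤ) : ℝ) + 1) * p + (1 - ((J - (m : ℤ) : ℤ) : ℝ))
            = (((J : ℝ) + 1) * p + (1 - (J : ℝ))) + (1 - p) * (m : ℕ) := by
          push_cast
          ring
        rw [hexp, hpw_add]
        have hpowm : pw ((1 - p) * (m : ℕ)) = (pw (1 - p)) ^ m := by
          rw [hpw_mul, ENNReal.rpow_natCast]
        rw [hpowm]
        ring
      calc ∑' m : ℕ, h (J - (m : ℤ))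
          = ∑' m : ℕ, pw (((J : ℝ) + 1) * p + (1 - (J : ℝ))) * φ x * (pw (1 - p)) ^ m :=
            tsum_congr hval
        _ = pw (((J : ℝ) + 1) * p + (1 - (J : ℝ))) * φ x * κ := by
            rw [ENNReal.tsum_mul_left, ENNReal.tsum_geometric, hκ]
        _ ≤ pw (2 * p) * κ * φ x ^ p := by
            have hsplit : pw (((J : ℝ) + 1) * p + (1 - (J : ℝ)))
                = pw ((J : ℝ) * (p - 1)) * pw (p + 1) := by
              rw [← hpw_add]
              congr 1
              ring
            have hJbound : pw ((J : ℝ) * (p - 1)) ≤ pw (p - 1) * φ x ^ (p - 1) := by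
              have h2t : pw (J : ℝ) ≤ 2 * φ x := by
                calc pw (J : ℝ) = pw 1 * pw ((J : ℝ) - 1) := by
                      rw [← hpw_add]; congr 1; ring
                  _ = 2 * pw ((J : ℝ) - 1) := by rw [hpw_one]
                  _ ≤ 2 * φ x := mul_le_mul_right hJ1.le _
              calc pw ((J : ℝ) * (p - 1)) = (pw (J : ℝ)) ^ (p - 1) := by
                    rw [hpw_mul]
                _ ≤ (2 * φ x) ^ (p - 1) :=
                    ENNReal.rpow_le_rpow h2t (by linarith)
                _ = (2:ℝ≥0∞) ^ (p - 1) * φ x ^ (p - 1) :=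
                    ENNReal.mul_rpow_of_nonneg _ _ (by linarith)
                _ = pw (p - 1) * φ x ^ (p - 1) := rfl
            calc pw (((J : ℝ) + 1) * p + (1 - (J : ℝ))) * φ x * κ
                = pw ((J : ℝ) * (p - 1)) * pw (p + 1) * φ x * κ := by rw [hsplit]
              _ ≤ pw (p - 1) * φ x ^ (p - 1) * pw (p + 1) * φ x * κ := by
                  exact mul_le_mul_left (mul_le_mul_left
                    (mul_le_mul_left hJbound _) _) _
              _ = (pw (p - 1) * pw (p + 1)) * (φ x ^ (p - 1) * φ x) * κ := by ring
              _ = pw (2 * p) * φ x ^ p * κ := by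
                  congr 1
                  congr 1
                  · rw [← hpw_add]; congr 1; ring
                  · conv_rhs => rw [show p = (p - 1) + 1 from by ring]
                    rw [ENNReal.rpow_add _ _ h0 (hφtop x), ENNReal.rpow_one]
              _ = pw (2 * p) * κ * φ x ^ p := by ring
  -- assemble everything
  calc ∫⁻ x, (∑' q : Q n,
        (ENNReal.ofReal |cubeAvg μ f q|) ^ 2 * (‖A q x‖₊ : ℝ≥0∞) ^ 2) ^ (p / 2) ∂μ
      ≤ ∑' j : ℤ, pw (((j : ℝ) + 1) * p) * ∫⁻ x, (F j x) ^ (p / 2) ∂μ := hmain1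
    _ ≤ ∑' j : ℤ, pw (((j : ℝ) + 1) * p) *
          (ENNReal.ofReal (Car ^ p) * (pw (1 - (j : ℝ)) * ∫⁻ x, g j x ∂μ)) := by
        refine ENNReal.tsum_le_tsum fun j => mul_le_mul_right ?_ _
        exact le_trans (hcarl j) (mul_le_mul_right (hweak j) _)
    _ = ENNReal.ofReal (Car ^ p) *
          ∑' j : ℤ, pw (((j : ℝ) + 1) * p + (1 - (j : ℝ))) * ∫⁻ x, g j x ∂μ := by
        rw [← ENNReal.tsum_mul_left]
        refine tsum_congr fun j => ?_
        rw [hpw_add]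
        ring
    _ = ENNReal.ofReal (Car ^ p) *
          ∫⁻ x, ∑' j : ℤ, pw (((j : ℝ) + 1) * p + (1 - (j : ℝ))) * g j x ∂μ := by
        congr 1
        rw [lintegral_tsum fun j => ((hgm j).const_mul _).aemeasurable]
        exact tsum_congr fun j => (lintegral_const_mul _ (hgm j)).symm
    _ ≤ ENNReal.ofReal (Car ^ p) * (pw (2 * p) * κ * ∫⁻ x, φ x ^ p ∂μ) := by
        refine mul_le_mul_right ?_ _
        calc ∫⁻ x, ∑' j : ℤ, pw (((j : ℝ) + 1) * p + (1 - (j : ℝ))) * g j x ∂μ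
            ≤ ∫⁻ x, pw (2 * p) * κ * φ x ^ p ∂μ := lintegral_mono hpoint
          _ = pw (2 * p) * κ * ∫⁻ x, φ x ^ p ∂μ := lintegral_const_mul _
              ((ENNReal.continuous_rpow_const.measurable).comp hφm)
    _ ≤ ENNReal.ofReal ((4 * (1 - 2 ^ (1 - p))⁻¹ * Car) ^ p) *
          ∫⁻ x, (‖f x‖₊ : ℝ≥0∞) ^ p ∂μ := by
        set β : ℝ := 1 - (2:ℝ) ^ (1 - p) with hβdef
        have hβ2 : (2:ℝ) ^ (1 - p) < 1 :=
          Real.rpow_lt_one_of_one_lt_of_neg (by norm_num) (by linarith)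
        have hβ2' : (0:ℝ) < (2:ℝ) ^ (1 - p) := Real.rpow_pos_of_pos (by norm_num) _
        have hβ0 : 0 < β := by rw [hβdef]; linarith
        have hβ1 : β ≤ 1 := by rw [hβdef]; linarith
        have hCle : ENNReal.ofReal (Car ^ p) * (pw (2 * p) * κ)
            ≤ ENNReal.ofReal ((4 * β⁻¹ * Car) ^ p) := by
          have hκeq : κ = ENNReal.ofReal β⁻¹ := by
            rw [hκ, hβdef]
            have hpw1p : pw (1 - p) = ENNReal.ofReal ((2:ℝ) ^ (1 - p)) := by
              show (2:ℝ≥0∞) ^ (1 - p) = _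
              rw [show (2:ℝ≥0∞) = ENNReal.ofReal 2 from by norm_num]
              exact ENNReal.ofReal_rpow_of_pos (by norm_num)
            rw [hpw1p, ← ENNReal.ofReal_one,
              ← ENNReal.ofReal_sub _ hβ2'.le, ENNReal.ofReal_inv_of_pos hβ0]
          have hpw2p : pw (2 * p) = ENNReal.ofReal ((4:ℝ) ^ p) := by
            show (2:ℝ≥0∞) ^ (2 * p) = _
            rw [ENNReal.rpow_mul]
            have h4 : (2:ℝ≥0∞) ^ (2:ℝ) = 4 := by
              rw [show (2:ℝ) = ((2:ℕ):ℝ) from by norm_num, ENNReal.rpow_natCast]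
              norm_num
            rw [h4, show (4:ℝ≥0∞) = ENNReal.ofReal 4 from by norm_num]
            exact ENNReal.ofReal_rpow_of_pos (by norm_num)
          rw [hκeq, hpw2p, ← ENNReal.ofReal_mul (by positivity),
            ← ENNReal.ofReal_mul (by positivity)]
          refine ENNReal.ofReal_le_ofReal ?_
          rw [Real.mul_rpow (by positivity) hCar0,
            Real.mul_rpow (by positivity) (by positivity)]
          have hβp : β⁻¹ ≤ (β⁻¹) ^ p := by
            have h1β : (1:ℝ) ≤ β⁻¹ := by
              have := one_div_le_one_div_of_le hβ0 hβ1
              simpa [one_div] using this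
            calc β⁻¹ = (β⁻¹) ^ (1:ℝ) := (Real.rpow_one _).symm
              _ ≤ (β⁻¹) ^ p := Real.rpow_le_rpow_of_exponent_le h1β hp.le
          have h4p : (0:ℝ) ≤ (4:ℝ) ^ p := (Real.rpow_pos_of_pos (by norm_num) p).le
          have hCarp : (0:ℝ) ≤ Car ^ p := Real.rpow_nonneg hCar0 p
          calc Car ^ p * ((4:ℝ) ^ p * β⁻¹) = (4:ℝ) ^ p * β⁻¹ * Car ^ p := by ring
            _ ≤ (4:ℝ) ^ p * (β⁻¹) ^ p * Car ^ p := by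
                refine mul_le_mul_of_nonneg_right ?_ hCarp
                exact mul_le_mul_of_nonneg_left hβp h4p
        calc ENNReal.ofReal (Car ^ p) * (pw (2 * p) * κ * ∫⁻ x, φ x ^ p ∂μ)
            = (ENNReal.ofReal (Car ^ p) * (pw (2 * p) * κ)) * ∫⁻ x, φ x ^ p ∂μ := by
              ring
          _ ≤ ENNReal.ofReal ((4 * β⁻¹ * Car) ^ p) * ∫⁻ x, φ x ^ p ∂μ :=
              mul_le_mul_left hCle _
          _ = ENNReal.ofReal ((4 * (1 - 2 ^ (1 - p))⁻¹ * Car) ^ p) *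
              ∫⁻ x, (‖f x‖₊ : ℝ≥0∞) ^ p ∂μ := by rw [hβdef]

end Dyad


open Dyad in
/-- Carleson embedding theorem on `L^p(μ)`, `1 < p ≤ 2`: if the functions `A_S`
(supported in `S`) satisfy the Carleson condition with constant `Car`, then
`‖(∑_S |⟨f⟩_S|² |A_S|²)^{1/2}‖_{L^p(μ)} ≲ Car ‖f‖_{L^p(μ)}`. -/
theorem carleson_embedding_Lp (n : ℕ) (p : ℝ) (hp : 1 < p) (hp2 : p ≤ 2) :
    ∃ C : ℝ, 0 < C ∧
    ∀ (μ : Measure (Fin n → ℝ)) (A : ℤ × (Fin n → ℤ) → (Fin n → ℝ) → ℝ) (Car : ℝ),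
      0 ≤ Car →
      (∀ q, Measurable (A q)) →
      (∀ q, ∀ x ∉ dyadicCube n q.1 q.2, A q x = 0) →
      (∀ (kQ : ℤ) (cQ : Fin n → ℤ),
        ∫⁻ x in dyadicCube n kQ cQ,
          (∑' S : {q : ℤ × (Fin n → ℤ) // dyadicCube n q.1 q.2 ⊆ dyadicCube n kQ cQ},
            (‖A S.1 x‖₊ : ℝ≥0∞) ^ 2) ^ (p / 2) ∂μ ≤
          ENNReal.ofReal (Car ^ p) * μ (dyadicCube n kQ cQ)) →
      ∀ f : (Fin n → ℝ) → ℝ, MemLp f (ENNReal.ofReal p) μ →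
        ∫⁻ x, (∑' q : ℤ × (Fin n → ℤ),
            (ENNReal.ofReal |cubeAvg μ f q|) ^ 2 * (‖A q x‖₊ : ℝ≥0∞) ^ 2) ^ (p / 2) ∂μ ≤
          ENNReal.ofReal ((C * Car) ^ p) * ∫⁻ x, (‖f x‖₊ : ℝ≥0∞) ^ p ∂μ := by
  have hp0 : (0:ℝ) < p := lt_trans one_pos hp
  have hβ2 : (2:ℝ) ^ (1 - p) < 1 :=
    Real.rpow_lt_one_of_one_lt_of_neg (by norm_num) (by linarith)
  have hβ0 : (0:ℝ) < 1 - 2 ^ (1 - p) := by linarith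
  refine ⟨4 * (1 - 2 ^ (1 - p))⁻¹, by positivity, ?_⟩
  intro μ A Car hCar0 hAm hAs hCar f hf
  obtain hfae := hf.aestronglyMeasurable.aemeasurable
  set f' : (Fin n → ℝ) → ℝ := hfae.mk f with hf'def
  have hf'm : Measurable f' := hfae.measurable_mk
  have hff' : f =ᵐ[μ] f' := hfae.ae_eq_mk
  have havq : ∀ q : ℤ × (Fin n → ℤ), cubeAvg μ f q = cubeAvg μ f' q := by
    intro q
    rw [cubeAvg, cubeAvg, integral_congr_ae (ae_restrict_of_ae hff')]
  have hnormint : ∫⁻ x, (‖f x‖₊ : ℝ≥0∞) ^ p ∂μ = ∫⁻ x, (‖f' x‖₊ : ℝ≥0∞) ^ p ∂μ :=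
    lintegral_congr_ae (hff'.mono fun x hx => by simp only [hx])
  have hf' : MemLp f' (ENNReal.ofReal p) μ := hf.ae_eq hff'
  have hfp' : ∫⁻ x, (‖f' x‖₊ : ℝ≥0∞) ^ p ∂μ ≠ ∞ := by
    have h2 := hf'.2
    have hne0 : ENNReal.ofReal p ≠ 0 := by
      simp only [ne_eq, ENNReal.ofReal_eq_zero, not_le]
      exact hp0
    rw [eLpNorm_eq_lintegral_rpow_enorm_toReal hne0 ENNReal.ofReal_ne_top] at h2
    rw [ENNReal.toReal_ofReal hp0.le] at h2
    simp only [enorm_eq_nnnorm] at h2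
    intro htop
    rw [htop] at h2
    rw [ENNReal.top_rpow_of_pos (by positivity)] at h2
    exact absurd h2 (lt_irrefl _)
  calc ∫⁻ x, (∑' q : ℤ × (Fin n → ℤ),
        (ENNReal.ofReal |cubeAvg μ f q|) ^ 2 * (‖A q x‖₊ : ℝ≥0∞) ^ 2) ^ (p / 2) ∂μ
      = ∫⁻ x, (∑' q : ℤ × (Fin n → ℤ),
        (ENNReal.ofReal |cubeAvg μ f' q|) ^ 2 * (‖A q x‖₊ : ℝ≥0∞) ^ 2) ^ (p / 2) ∂μ := by
        simp_rw [havq]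
    _ ≤ ENNReal.ofReal ((4 * (1 - 2 ^ (1 - p))⁻¹ * Car) ^ p) *
        ∫⁻ x, (‖f' x‖₊ : ℝ≥0∞) ^ p ∂μ :=
        main_estimate hp hp2 μ A Car hCar0 hAm hAs hCar f' hf'm hfp'
    _ = ENNReal.ofReal ((4 * (1 - 2 ^ (1 - p))⁻¹ * Car) ^ p) *
        ∫⁻ x, (‖f x‖₊ : ℝ≥0∞) ^ p ∂μ := by rw [hnormint]
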